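/- Let n ≥ 1, 0 ≤ ε < 1, and let N be the n-qubit depolarizing channel N(ρ) = (1−ε)·ρ + ε·tr[ρ]·I/2^n on 2^n×2^n complex matrices. Then for every n-qubit Pauli operator O that is not the identity, the retrieving cost satisfies γ_O(N) = 1/(1−ε). -/

import Mathlib

open Matrix
open scoped Kronecker ComplexOrder

abbrev MatC (n : Type*) := Matrix n n ℂ

/-- A linear map on matrices is Hermitian-preserving if it sends Hermitian
matrices to Hermitian matrices. -/
def IsHermitianPreserving {n : Type*} [Fintype n] [DecidableEq n]
    (M : MatC n →ₗ[ℂ] MatC n) : Prop :=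
  ∀ X : MatC n, X.IsHermitian → (M X).IsHermitian

/-- A linear map on matrices is trace-scaling if it scales the trace by a fixed
real factor. -/
def IsTraceScaling {n : Type*} [Fintype n] [DecidableEq n]
    (M : MatC n →ₗ[ℂ] MatC n) : Prop :=
  ∃ p : ℝ, ∀ X : MatC n, (M X).trace = (p : ℂ) * X.trace

/-- The Choi matrix `J_M = Σ_{i,j} |i⟩⟨j| ⊗ M(|i⟩⟨j|)` of a linear map on matrices. -/
def choi {n : Type*} [Fintype n] [DecidableEq n]
    (M : MatC n →ₗ[ℂ] MatC n) : Matrix (n × n) (n × n) ℂ :=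
  Matrix.of fun p q => M (Matrix.single p.1 q.1 1) p.2 q.2

/-- A quantum channel is a completely positive (positive semidefinite Choi matrix)
trace-preserving linear map. -/
def IsQuantumChannel {n : Type*} [Fintype n] [DecidableEq n]
    (M : MatC n →ₗ[ℂ] MatC n) : Prop :=
  (choi M).PosSemidef ∧ ∀ X : MatC n, (M X).trace = X.trace

/-- `Md` is the adjoint of `M` with respect to the Hilbert-Schmidt inner product
`⟨A, B⟩ = tr[A† B]`. -/
def IsAdjointPair {n : Type*} [Fintype n] [DecidableEq n]
    (M Md : MatC n →ₗ[ℂ] MatC n) : Prop :=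
  ∀ A B : MatC n, (Aᴴ * M B).trace = ((Md A)ᴴ * B).trace

/-- A density matrix: positive semidefinite with unit trace. -/
def IsDensityMatrix {n : Type*} [Fintype n] [DecidableEq n] (ρ : MatC n) : Prop :=
  ρ.PosSemidef ∧ ρ.trace = 1

/-- The Hermitian matrices as a real submodule of the complex matrices. -/
noncomputable def hermSubmodule (n : Type*) [Fintype n] [DecidableEq n] :
    Submodule ℝ (MatC n) :=
  selfAdjoint.submodule ℝ (MatC n)

/-- The image of the Hermitian matrices under a (complex-)linear map, as a real
submodule. -/
noncomputable def hermitianImage {n : Type*} [Fintype n] [DecidableEq n]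
    (M : MatC n →ₗ[ℂ] MatC n) : Submodule ℝ (MatC n) :=
  (hermSubmodule n).map (M.restrictScalars ℝ)

/-- The linear map `ρ ↦ Σ_i E_i ρ E_i†` given by a finite family of Kraus operators. -/
noncomputable def krausMap {n : Type*} [Fintype n] {k : ℕ} (E : Fin k → Matrix n n ℂ) :
    MatC n →ₗ[ℂ] MatC n where
  toFun ρ := ∑ i, E i * ρ * (E i)ᴴ
  map_add' ρ σ := by
    simp [Matrix.mul_add, Matrix.add_mul, Finset.sum_add_distrib]
  map_smul' c ρ := by
    simp [Matrix.mul_smul, Matrix.smul_mul, Finset.smul_sum]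

/-- The Pauli X matrix. -/
def PauliX : MatC (Fin 2) := !![0, 1; 1, 0]

/-- The Pauli Y matrix. -/
def PauliY : MatC (Fin 2) := !![0, -Complex.I; Complex.I, 0]

/-- The Pauli Z matrix. -/
def PauliZ : MatC (Fin 2) := !![1, 0; 0, -1]

/-- The Kraus operators of the single-qubit generalized amplitude damping channel
with damping factor `ε` and temperature indicator `p`. -/
noncomputable def gadKraus (p ε : ℝ) : Fin 4 → MatC (Fin 2) :=
  ![(Real.sqrt p : ℂ) • !![1, 0; 0, (Real.sqrt (1 - ε) : ℂ)],
    ((Real.sqrt p * Real.sqrt ε : ℝ) : ℂ) • !![0, 1; 0, 0],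
    (Real.sqrt (1 - p) : ℂ) • !![(Real.sqrt (1 - ε) : ℂ), 0; 0, 1],
    ((Real.sqrt (1 - p) * Real.sqrt ε : ℝ) : ℂ) • !![0, 0; 1, 0]]

/-- The single-qubit generalized amplitude damping channel. -/
noncomputable def gad (p ε : ℝ) : MatC (Fin 2) →ₗ[ℂ] MatC (Fin 2) :=
  krausMap (gadKraus p ε)

/-- The set of costs `|c₁| + |c₂|` over all two-channel retrievers for the shadow
information `tr[ρ O]` through the noisy channel `N`: real numbers `c₁, c₂` and
quantum channels `D₁, D₂` such that `D = c₁·D₁ + c₂·D₂` satisfies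
`tr[D(N(ρ))·O] = tr[ρ·O]` for every density matrix `ρ`. -/
def retrCosts {n : Type*} [Fintype n] [DecidableEq n]
    (N : MatC n →ₗ[ℂ] MatC n) (O : MatC n) : Set ℝ :=
  {s | ∃ (c₁ c₂ : ℝ) (D₁ D₂ : MatC n →ₗ[ℂ] MatC n),
    IsQuantumChannel D₁ ∧ IsQuantumChannel D₂ ∧
    (∀ ρ : MatC n, IsDensityMatrix ρ →
      ((((c₁ : ℂ) • D₁ + (c₂ : ℂ) • D₂) (N ρ)) * O).trace = (ρ * O).trace) ∧
    s = |c₁| + |c₂|}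

/-- The single-qubit Pauli matrices `I, X, Y, Z` indexed by `Fin 4`. -/
noncomputable def pauli1 : Fin 4 → MatC (Fin 2) := ![1, PauliX, PauliY, PauliZ]

/-- The `n`-qubit Pauli operator determined by a word `s : Fin n → Fin 4`, i.e. the
tensor product `σ_{s 0} ⊗ ⋯ ⊗ σ_{s (n-1)}`, as a matrix on the `n`-fold tensor
product space indexed by `Fin n → Fin 2`. -/
noncomputable def pauliN (n : ℕ) (s : Fin n → Fin 4) : MatC (Fin n → Fin 2) :=
  Matrix.of fun x y => ∏ i, pauli1 (s i) (x i) (y i)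

/-- The `n`-qubit mixed Pauli channel `ρ ↦ Σ_σ p_σ · σρσ`. -/
noncomputable def mixedPauli (n : ℕ) (prob : (Fin n → Fin 4) → ℝ) :
    MatC (Fin n → Fin 2) →ₗ[ℂ] MatC (Fin n → Fin 2) where
  toFun ρ := ∑ s, (prob s : ℂ) • (pauliN n s * ρ * pauliN n s)
  map_add' ρ σ := by
    simp [Matrix.mul_add, Matrix.add_mul, Finset.sum_add_distrib, smul_add]
  map_smul' c ρ := by
    simp only [Matrix.mul_smul, Matrix.smul_mul, RingHom.id_apply, Finset.smul_sum]
    exact Finset.sum_congr rfl fun s _ => smul_comm _ _ _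

open Classical in
/-- The total probability `P⁺` of the Pauli operators that commute with `O`. -/
noncomputable def commWeight (n : ℕ) (prob : (Fin n → Fin 4) → ℝ)
    (O : MatC (Fin n → Fin 2)) : ℝ :=
  ∑ s, if pauliN n s * O = O * pauliN n s then prob s else 0

open Classical in
/-- The total probability `P⁻` of the Pauli operators that anticommute with `O`. -/
noncomputable def anticommWeight (n : ℕ) (prob : (Fin n → Fin 4) → ℝ)
    (O : MatC (Fin n → Fin 2)) : ℝ :=
  ∑ s, if pauliN n s * O = -(O * pauliN n s) then prob s else 0

/-- The `n`-qubit depolarizing channel `ρ ↦ (1−ε)·ρ + ε·tr[ρ]·I/2ⁿ`. -/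
noncomputable def depol (n : ℕ) (ε : ℝ) :
    MatC (Fin n → Fin 2) →ₗ[ℂ] MatC (Fin n → Fin 2) where
  toFun ρ := ((1 - ε : ℝ) : ℂ) • ρ + ((ε : ℂ) * ρ.trace / (2 ^ n : ℂ)) • 1
  map_add' ρ σ := by
    simp only [Matrix.trace_add]
    module
  map_smul' c ρ := by
    simp only [Matrix.trace_smul, smul_eq_mul, RingHom.id_apply]
    module

section PauliLemmas

lemma pauli1_mul_self (k : Fin 4) : pauli1 k * pauli1 k = 1 := by
  fin_cases k <;>
    · ext i j
      fin_cases i <;> fin_cases j <;>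
        simp [pauli1, PauliX, PauliY, PauliZ, Matrix.mul_apply, Fin.sum_univ_two,
          Matrix.one_apply, Complex.ext_iff]

lemma pauli1_conj (k : Fin 4) (a b : Fin 2) :
    (starRingEnd ℂ) (pauli1 k a b) = pauli1 k b a := by
  fin_cases k <;> fin_cases a <;> fin_cases b <;>
    simp [pauli1, PauliX, PauliY, PauliZ, Matrix.one_apply, Complex.ext_iff]

lemma pauli1_trace_eq_zero (k : Fin 4) (hk : k ≠ 0) : (pauli1 k).trace = 0 := by
  fin_cases k
  · simp at hk
  all_goals simp [pauli1, PauliX, PauliY, PauliZ, Matrix.trace, Matrix.diag, Fin.sum_univ_two]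

lemma prod_one_apply {n : ℕ} (x y : Fin n → Fin 2) :
    (∏ i, (1 : MatC (Fin 2)) (x i) (y i)) = (1 : MatC (Fin n → Fin 2)) x y := by
  by_cases h : x = y
  · subst h; simp [Matrix.one_apply]
  · obtain ⟨i, hi⟩ := Function.ne_iff.mp h
    rw [Matrix.one_apply_ne h]
    exact Finset.prod_eq_zero (Finset.mem_univ i) (Matrix.one_apply_ne hi)

lemma pauliN_mul_self {n : ℕ} (t : Fin n → Fin 4) : pauliN n t * pauliN n t = 1 := by
  ext x y
  rw [Matrix.mul_apply]
  calc ∑ z, pauliN n t x z * pauliN n t z y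
      = ∑ z : Fin n → Fin 2, ∏ i, (pauli1 (t i) (x i) (z i) * pauli1 (t i) (z i) (y i)) :=
        Finset.sum_congr rfl fun z _ => by
          show (∏ i, pauli1 (t i) (x i) (z i)) * (∏ i, pauli1 (t i) (z i) (y i)) = _
          exact Finset.prod_mul_distrib.symm
    _ = ∏ i, ∑ a : Fin 2, pauli1 (t i) (x i) a * pauli1 (t i) a (y i) :=
        (Fintype.prod_sum fun i a => pauli1 (t i) (x i) a * pauli1 (t i) a (y i)).symm
    _ = ∏ i, (pauli1 (t i) * pauli1 (t i)) (x i) (y i) := by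
        simp [Matrix.mul_apply]
    _ = (1 : MatC (Fin n → Fin 2)) x y := by
        simp only [pauli1_mul_self]; exact prod_one_apply x y

lemma pauliN_isHermitian {n : ℕ} (t : Fin n → Fin 4) : (pauliN n t).IsHermitian := by
  ext x y
  simp only [Matrix.conjTranspose_apply, pauliN, Matrix.of_apply, star_prod]
  simp only [Complex.star_def, pauli1_conj]

lemma pauliN_trace {n : ℕ} (t : Fin n → Fin 4) :
    (pauliN n t).trace = ∏ i, (pauli1 (t i)).trace := by
  simp only [Matrix.trace, Matrix.diag, pauliN, Matrix.of_apply]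
  exact (Fintype.prod_sum (fun i a => pauli1 (t i) a a)).symm

lemma pauliN_trace_eq_zero {n : ℕ} (t : Fin n → Fin 4) (h : pauliN n t ≠ 1) :
    (pauliN n t).trace = 0 := by
  have hex : ∃ i, t i ≠ 0 := by
    by_contra hc
    push_neg at hc
    apply h
    ext x y
    simp only [pauliN, Matrix.of_apply]
    rw [← prod_one_apply x y]
    exact Finset.prod_congr rfl fun i _ => by rw [hc i]; rfl
  obtain ⟨i, hi⟩ := hex
  rw [pauliN_trace]
  exact Finset.prod_eq_zero (Finset.mem_univ i) (pauli1_trace_eq_zero _ hi)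

end PauliLemmas

section AuxLemmas

variable {d : Type*} [Fintype d] [DecidableEq d]

lemma psd_trace_nonneg {A : MatC d} (hA : A.PosSemidef) : 0 ≤ A.trace := by
  refine Finset.sum_nonneg fun i _ => ?_
  have := hA.dotProduct_mulVec_nonneg (Pi.single i 1)
  simpa [Matrix.mulVec, dotProduct, Pi.single_apply] using this

open scoped MatrixOrder Matrix.Norms.L2Operator in
lemma psd_eq_conjTranspose_mul_self {e : Type*} [Fintype e] [DecidableEq e] {A : MatC e}
    (hA : A.PosSemidef) : ∃ B : MatC e, A = Bᴴ * B := by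
  obtain ⟨B, hB⟩ := CStarAlgebra.nonneg_iff_eq_star_mul_self.mp hA.nonneg
  exact ⟨B, hB⟩

lemma psd_trace_mul_nonneg {A B : MatC d} (hA : A.PosSemidef) (hB : B.PosSemidef) :
    0 ≤ (A * B).trace := by
  obtain ⟨S, hS⟩ := psd_eq_conjTranspose_mul_self hA
  rw [hS, Matrix.mul_assoc, Matrix.trace_mul_comm]
  have h := hB.mul_mul_conjTranspose_same S
  exact psd_trace_nonneg h

lemma map_entry_eq (M : MatC d →ₗ[ℂ] MatC d) (X : MatC d) (a b : d) :
    M X a b = ∑ i, ∑ j, X i j * choi M (i, a) (j, b) := by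
  conv_lhs => rw [Matrix.matrix_eq_sum_single X]
  rw [map_sum, Matrix.sum_apply]
  refine Finset.sum_congr rfl fun i _ => ?_
  rw [map_sum, Matrix.sum_apply]
  refine Finset.sum_congr rfl fun j _ => ?_
  have h : Matrix.single i j (X i j) = X i j • Matrix.single i j 1 := by
    rw [Matrix.smul_single, smul_eq_mul, mul_one]
  rw [h, LinearMap.map_smul, Matrix.smul_apply, smul_eq_mul]
  rfl

lemma sum_comm4 {α β γ δ : Type*} [Fintype α] [Fintype β] [Fintype γ] [Fintype δ]
    (f : α → β → γ → δ → ℂ) :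
    ∑ i, ∑ j, ∑ k, ∑ m, f i j k m = ∑ k, ∑ m, ∑ i, ∑ j, f i j k m := by
  calc ∑ i, ∑ j, ∑ k, ∑ m, f i j k m
      = ∑ i, ∑ k, ∑ j, ∑ m, f i j k m :=
        Finset.sum_congr rfl fun i _ => Finset.sum_comm
    _ = ∑ k, ∑ i, ∑ j, ∑ m, f i j k m := Finset.sum_comm
    _ = ∑ k, ∑ i, ∑ m, ∑ j, f i j k m :=
        Finset.sum_congr rfl fun k _ => Finset.sum_congr rfl fun i _ => Finset.sum_comm
    _ = ∑ k, ∑ m, ∑ i, ∑ j, f i j k m :=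
        Finset.sum_congr rfl fun k _ => Finset.sum_comm

lemma choi_psd_map_psd {M : MatC d →ₗ[ℂ] MatC d} (hM : (choi M).PosSemidef)
    {X : MatC d} (hX : X.PosSemidef) : (M X).PosSemidef := by
  obtain ⟨B, hB⟩ := psd_eq_conjTranspose_mul_self hX
  obtain ⟨L, hL⟩ := psd_eq_conjTranspose_mul_self hM
  have key : M X = (Matrix.of fun (km : d × (d × d)) b =>
      ∑ j, B km.1 j * L km.2 (j, b))ᴴ * (Matrix.of fun (km : d × (d × d)) b =>
      ∑ j, B km.1 j * L km.2 (j, b)) := by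
    ext a b
    rw [map_entry_eq, Matrix.mul_apply]
    calc ∑ i, ∑ j, X i j * choi M (i, a) (j, b)
        = ∑ i, ∑ j, (∑ k, star (B k i) * B k j) * (∑ m, star (L m (i, a)) * L m (j, b)) := by
          refine Finset.sum_congr rfl fun i _ => Finset.sum_congr rfl fun j _ => ?_
          rw [hB, hL]
          simp [Matrix.mul_apply, Matrix.conjTranspose_apply]
      _ = ∑ i, ∑ j, ∑ k, ∑ m, (star (B k i) * B k j) * (star (L m (i, a)) * L m (j, b)) := by
          refine Finset.sum_congr rfl fun i _ => Finset.sum_congr rfl fun j _ => ?_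
          rw [Finset.sum_mul_sum]
      _ = ∑ k, ∑ m, ∑ i, ∑ j, (star (B k i) * B k j) * (star (L m (i, a)) * L m (j, b)) :=
          sum_comm4 _
      _ = ∑ km : d × (d × d), (∑ i, star (B km.1 i * L km.2 (i, a))) *
            (∑ j, B km.1 j * L km.2 (j, b)) := by
          rw [Fintype.sum_prod_type]
          refine Finset.sum_congr rfl fun k _ => Finset.sum_congr rfl fun m _ => ?_
          rw [Finset.sum_mul_sum]
          refine Finset.sum_congr rfl fun i _ => Finset.sum_congr rfl fun j _ => ?_
          simp only [star_mul']
          ring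
      _ = ∑ km : d × (d × d), star ((Matrix.of fun (km : d × (d × d)) b =>
            ∑ j, B km.1 j * L km.2 (j, b)) km a) * ((Matrix.of fun (km : d × (d × d)) b =>
            ∑ j, B km.1 j * L km.2 (j, b)) km b) := by
          refine Finset.sum_congr rfl fun km _ => ?_
          simp only [Matrix.of_apply, star_sum]
      _ = _ := by
          refine Finset.sum_congr rfl fun km _ => ?_
          rw [Matrix.conjTranspose_apply]
  rw [key]
  exact Matrix.posSemidef_conjTranspose_mul_self _

lemma psd_real_smul {c : ℝ} (hc : 0 ≤ c) {A : MatC d} (hA : A.PosSemidef) :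
    (((c : ℂ)) • A).PosSemidef := by
  constructor
  · show (((c : ℂ)) • A)ᴴ = ((c : ℂ)) • A
    rw [Matrix.conjTranspose_smul, hA.isHermitian.eq, Complex.star_def,
      Complex.conj_ofReal]
  · exact (hA.smul (a := (c : ℂ)) (by exact_mod_cast hc)).2

lemma psd_one_add {O : MatC d} (hO : O.IsHermitian) (h2 : O * O = 1) :
    (1 + O).PosSemidef := by
  have key : (1 + O) = (((1/2 : ℝ) : ℂ)) • ((1 + O)ᴴ * (1 + O)) := by
    rw [Matrix.conjTranspose_add, Matrix.conjTranspose_one, hO.eq]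
    have hmul : (1 + O) * (1 + O) = 1 + O + (O + O * O) := by noncomm_ring
    rw [hmul, h2]
    push_cast
    module
  rw [key]
  exact psd_real_smul (by norm_num) (Matrix.posSemidef_conjTranspose_mul_self _)

lemma choi_id_psd : (choi (LinearMap.id : MatC d →ₗ[ℂ] MatC d)).PosSemidef := by
  have key : choi (LinearMap.id : MatC d →ₗ[ℂ] MatC d) =
      (Matrix.of fun (_ : Unit) (p : d × d) => if p.1 = p.2 then (1:ℂ) else 0)ᴴ *
      (Matrix.of fun (_ : Unit) (p : d × d) => if p.1 = p.2 then (1:ℂ) else 0) := by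
    ext p q
    by_cases h1 : p.1 = p.2 <;> by_cases h2 : q.1 = q.2 <;>
      simp [choi, Matrix.single, Matrix.mul_apply, Matrix.conjTranspose_apply, h1, h2]
  rw [key]
  exact Matrix.posSemidef_conjTranspose_mul_self _

lemma id_channel : IsQuantumChannel (LinearMap.id : MatC d →ₗ[ℂ] MatC d) :=
  ⟨choi_id_psd, fun _ => rfl⟩

lemma obs_bound {σ O : MatC d} (hσ : IsDensityMatrix σ) (hO : O.IsHermitian)
    (h2 : O * O = 1) : ∃ r : ℝ, (σ * O).trace = (r : ℂ) ∧ |r| ≤ 1 := by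
  set z := (σ * O).trace with hz
  have hplus : (0 : ℂ) ≤ 1 + z := by
    have := psd_trace_mul_nonneg hσ.1 (psd_one_add hO h2)
    rwa [Matrix.mul_add, Matrix.trace_add, Matrix.mul_one, hσ.2] at this
  have hminus : (0 : ℂ) ≤ 1 - z := by
    have h2' : (-O) * (-O) = 1 := by rw [Matrix.neg_mul, Matrix.mul_neg, neg_neg, h2]
    have := psd_trace_mul_nonneg hσ.1 (psd_one_add hO.neg h2')
    rwa [Matrix.mul_add, Matrix.trace_add, Matrix.mul_one, hσ.2, Matrix.mul_neg,
      Matrix.trace_neg, ← sub_eq_add_neg] at this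
  have h1 := Complex.le_def.mp hplus
  have h2r := Complex.le_def.mp hminus
  simp only [Complex.zero_re, Complex.zero_im, Complex.add_re, Complex.add_im,
    Complex.sub_re, Complex.sub_im, Complex.one_re, Complex.one_im] at h1 h2r
  have him : z.im = 0 := by linarith [h1.2]
  refine ⟨z.re, ?_, ?_⟩
  · exact Complex.ext (by simp) (by simp [him])
  · rw [abs_le]
    constructor <;> [linarith [h1.1]; linarith [h2r.1]]

end AuxLemmas
/-- The retrieving cost of any non-identity `n`-qubit Pauli observable through the
`n`-qubit depolarizing channel with noise level `ε` is `1/(1−ε)`. -/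
theorem stmt17 (n : ℕ) (hn : 1 ≤ n) (ε : ℝ) (hε0 : 0 ≤ ε) (hε1 : ε < 1)
    (t : Fin n → Fin 4) (hO : pauliN n t ≠ 1) :
    sInf (retrCosts (depol n ε) (pauliN n t)) = 1 / (1 - ε) := by
  set O := pauliN n t with hOdef
  have hOherm : O.IsHermitian := pauliN_isHermitian t
  have hOsq : O * O = 1 := pauliN_mul_self t
  have hOtr : O.trace = 0 := pauliN_trace_eq_zero t hO
  have h1ε : (0:ℝ) < 1 - ε := by linarith
  have h2n : ((2:ℂ) ^ n) ≠ 0 := pow_ne_zero _ two_ne_zero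
  have htr1 : (1 : MatC (Fin n → Fin 2)).trace = (2 : ℂ) ^ n := by
    rw [Matrix.trace_one]
    simp [Fintype.card_fun]
  have hdep : ∀ ρ : MatC (Fin n → Fin 2), depol n ε ρ =
      ((1 - ε : ℝ) : ℂ) • ρ + ((ε : ℂ) * ρ.trace / (2 ^ n : ℂ)) • 1 := fun ρ => rfl
  -- the two extremal states
  set rc : ℝ := ((2:ℝ) ^ n)⁻¹ with hrc
  have hrcC : ((rc : ℂ)) = ((2:ℂ) ^ n)⁻¹ := by push_cast [hrc]; ring
  have hrc1 : (rc : ℂ) * (2:ℂ) ^ n = 1 := by rw [hrcC]; exact inv_mul_cancel₀ h2n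
  set ρp : MatC (Fin n → Fin 2) := (rc : ℂ) • (1 + O) with hρp
  set ρm : MatC (Fin n → Fin 2) := (rc : ℂ) • (1 - O) with hρm
  have hρpd : IsDensityMatrix ρp := by
    constructor
    · exact psd_real_smul (by positivity) (psd_one_add hOherm hOsq)
    · rw [hρp, Matrix.trace_smul, Matrix.trace_add, htr1, hOtr, add_zero, smul_eq_mul, hrc1]
  have hρmd : IsDensityMatrix ρm := by
    constructor
    · have h2' : (-O) * (-O) = 1 := by rw [Matrix.neg_mul, Matrix.mul_neg, neg_neg, hOsq]
      have := psd_real_smul (c := rc) (by positivity) (psd_one_add hOherm.neg h2')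
      rwa [← sub_eq_add_neg] at this
    · rw [hρm, Matrix.trace_smul, Matrix.trace_sub, htr1, hOtr, sub_zero, smul_eq_mul, hrc1]
  have hρpO : (ρp * O).trace = 1 := by
    rw [hρp, Matrix.smul_mul, Matrix.trace_smul, Matrix.add_mul, Matrix.one_mul, hOsq,
      Matrix.trace_add, hOtr, htr1, zero_add, smul_eq_mul, hrc1]
  have hρmO : (ρm * O).trace = -1 := by
    rw [hρm, Matrix.smul_mul, Matrix.trace_smul, Matrix.sub_mul, Matrix.one_mul, hOsq,
      Matrix.trace_sub, hOtr, htr1, zero_sub, smul_eq_mul, mul_neg, hrc1]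
  -- membership: the identity recovery at cost 1/(1-ε)
  have hmem : 1 / (1 - ε) ∈ retrCosts (depol n ε) O := by
    refine ⟨1 / (1 - ε), 0, LinearMap.id, LinearMap.id, id_channel, id_channel, ?_, ?_⟩
    · intro ρ hρ
      have hc : ((1 / (1 - ε) : ℝ) : ℂ) * ((1 - ε : ℝ) : ℂ) = 1 := by
        rw [← Complex.ofReal_mul]
        norm_cast
        field_simp
      simp only [Complex.ofReal_zero, zero_smul, add_zero, LinearMap.add_apply,
        LinearMap.smul_apply, LinearMap.id_apply]
      rw [hdep ρ, smul_add, smul_smul, smul_smul, Matrix.add_mul, Matrix.trace_add,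
        Matrix.smul_mul, Matrix.smul_mul, Matrix.trace_smul, Matrix.trace_smul,
        Matrix.one_mul, hOtr]
      simp only [smul_eq_mul, mul_zero, add_zero]
      rw [hc, one_mul]
    · rw [abs_of_pos (by positivity), abs_zero, add_zero]
  -- lower bound
  have hlb : ∀ s ∈ retrCosts (depol n ε) O, 1 / (1 - ε) ≤ s := by
    rintro s ⟨c₁, c₂, D₁, D₂, h₁, h₂, heq, rfl⟩
    have hd1p : IsDensityMatrix (D₁ ρp) :=
      ⟨choi_psd_map_psd h₁.1 hρpd.1, by rw [h₁.2, hρpd.2]⟩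
    have hd1m : IsDensityMatrix (D₁ ρm) :=
      ⟨choi_psd_map_psd h₁.1 hρmd.1, by rw [h₁.2, hρmd.2]⟩
    have hd2p : IsDensityMatrix (D₂ ρp) :=
      ⟨choi_psd_map_psd h₂.1 hρpd.1, by rw [h₂.2, hρpd.2]⟩
    have hd2m : IsDensityMatrix (D₂ ρm) :=
      ⟨choi_psd_map_psd h₂.1 hρmd.1, by rw [h₂.2, hρmd.2]⟩
    obtain ⟨r1p, hr1p, hb1p⟩ := obs_bound hd1p hOherm hOsq
    obtain ⟨r1m, hr1m, hb1m⟩ := obs_bound hd1m hOherm hOsq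
    obtain ⟨r2p, hr2p, hb2p⟩ := obs_bound hd2p hOherm hOsq
    obtain ⟨r2m, hr2m, hb2m⟩ := obs_bound hd2m hOherm hOsq
    have hexp : ∀ (D : MatC (Fin n → Fin 2) →ₗ[ℂ] MatC (Fin n → Fin 2))
        (σ : MatC (Fin n → Fin 2)), σ.trace = 1 →
        (D (depol n ε σ) * O).trace
          = ((1 - ε : ℝ) : ℂ) * (D σ * O).trace + ((ε : ℂ) / (2 ^ n : ℂ)) * (D 1 * O).trace := by
      intro D σ hσtr
      rw [hdep σ, hσtr, map_add, LinearMap.map_smul, LinearMap.map_smul,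
        Matrix.add_mul, Matrix.smul_mul, Matrix.smul_mul, Matrix.trace_add,
        Matrix.trace_smul, Matrix.trace_smul]
      simp only [smul_eq_mul]
      ring
    have hp := heq ρp hρpd
    have hm := heq ρm hρmd
    simp only [LinearMap.add_apply, LinearMap.smul_apply, Matrix.add_mul, Matrix.smul_mul,
      Matrix.trace_add, Matrix.trace_smul, smul_eq_mul] at hp hm
    rw [hexp D₁ ρp hρpd.2, hexp D₂ ρp hρpd.2, hr1p, hr2p, hρpO] at hp
    rw [hexp D₁ ρm hρmd.2, hexp D₂ ρm hρmd.2, hr1m, hr2m, hρmO] at hm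
    have hkey : ((1 - ε : ℝ) : ℂ) * ((c₁ : ℂ) * ((r1p : ℂ) - (r1m : ℂ))
        + (c₂ : ℂ) * ((r2p : ℂ) - (r2m : ℂ))) = 2 := by
      linear_combination hp - hm
    have hkeyR : (1 - ε) * (c₁ * (r1p - r1m) + c₂ * (r2p - r2m)) = 2 := by
      exact_mod_cast hkey
    have habs : |c₁ * (r1p - r1m) + c₂ * (r2p - r2m)| ≤ |c₁| * 2 + |c₂| * 2 := by
      calc |c₁ * (r1p - r1m) + c₂ * (r2p - r2m)|
          ≤ |c₁ * (r1p - r1m)| + |c₂ * (r2p - r2m)| := abs_add_le _ _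
        _ = |c₁| * |r1p - r1m| + |c₂| * |r2p - r2m| := by rw [abs_mul, abs_mul]
        _ ≤ |c₁| * 2 + |c₂| * 2 := by
            have e1 : |r1p - r1m| ≤ 2 := by
              calc |r1p - r1m| ≤ |r1p| + |r1m| := abs_sub _ _
                _ ≤ 2 := by linarith
            have e2 : |r2p - r2m| ≤ 2 := by
              calc |r2p - r2m| ≤ |r2p| + |r2m| := abs_sub _ _
                _ ≤ 2 := by linarith
            have := abs_nonneg c₁
            have := abs_nonneg c₂
            nlinarith
    have h2le : (2:ℝ) ≤ (1 - ε) * (|c₁| * 2 + |c₂| * 2) := by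
      calc (2:ℝ) = (1 - ε) * (c₁ * (r1p - r1m) + c₂ * (r2p - r2m)) := hkeyR.symm
        _ ≤ (1 - ε) * (|c₁| * 2 + |c₂| * 2) :=
            mul_le_mul_of_nonneg_left (le_trans (le_abs_self _) habs) h1ε.le
    rw [div_le_iff₀ h1ε]
    nlinarith
  exact le_antisymm
    (csInf_le ⟨1 / (1 - ε), fun s hs => hlb s hs⟩ hmem)
    (le_csInf ⟨_, hmem⟩ hlb)
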